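/- For every v ∈ W_i and every u ∈ T, the distance from v to u in G satisfies δ_G(v,u) = min_{z ∈ T ∪ {u}} ( δ_i(v,z) + δ_G(z,u) ); in particular, either some directed walk realizing δ_G(v,u) lies entirely inside G_i, or δ_G(v,u) = δ_i(v,z) + δ_G(z,u) for some z ∈ T. -/

import Mathlib

/-- A directed graph on vertex type `V` with integer edge lengths. -/
structure Digraph' (V : Type) where
  Adj : V → V → Prop
  len : V → V → ℤ

namespace Digraph'

variable {V : Type}

/-- Directed walks in `G` from `u` to `v`. -/
inductive Walk (G : Digraph' V) : V → V → Type where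
  | nil {u : V} : Walk G u u
  | cons {u v w : V} (h : G.Adj u v) (p : Walk G v w) : Walk G u w

/-- The total length (weight) of a walk: the sum of the lengths of its edges. -/
def Walk.weight {G : Digraph' V} : {u v : V} → G.Walk u v → ℤ
  | _, _, .nil => 0
  | u, _, .cons (v := x) _ p => G.len u x + Walk.weight p

/-- The list of vertices visited by a walk. -/
def Walk.support {G : Digraph' V} : {u v : V} → G.Walk u v → List V
  | u, _, .nil => [u]
  | u, _, .cons _ p => u :: Walk.support p

/-- The number of edges of a walk. -/
def Walk.edgeCount {G : Digraph' V} : {u v : V} → G.Walk u v → ℕ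
  | _, _, .nil => 0
  | _, _, .cons _ p => Walk.edgeCount p + 1

/-- The distance from `u` to `v`: the infimum of the total lengths of directed walks
from `u` to `v` (`⊤` if there is no such walk). -/
noncomputable def dist (G : Digraph' V) (u v : V) : EReal :=
  ⨅ p : G.Walk u v, ((Walk.weight p : ℝ) : EReal)

/-- The subgraph of `G` induced by a set `S` of vertices. -/
def induce (G : Digraph' V) (S : Set V) : Digraph' V where
  Adj a b := G.Adj a b ∧ a ∈ S ∧ b ∈ S
  len := G.len

-- helpers
variable {G : Digraph' V}

def Walk.append : {a b c : V} → G.Walk a b → G.Walk b c → G.Walk a c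
  | _, _, _, .nil, q => q
  | _, _, _, .cons h p, q => .cons h (p.append q)

lemma Walk.weight_append : ∀ {a b c : V} (p : G.Walk a b) (q : G.Walk b c),
    (p.append q).weight = p.weight + q.weight
  | _, _, _, .nil, q => by simp [append, weight]
  | _, _, _, .cons h p, q => by
      simp [append, weight, weight_append p q, add_assoc]

def Walk.ofInduce {S : Set V} : {a b : V} → (G.induce S).Walk a b → G.Walk a b
  | _, _, .nil => .nil
  | _, _, .cons h p => .cons h.1 (ofInduce p)

lemma Walk.weight_ofInduce {S : Set V} : ∀ {a b : V} (p : (G.induce S).Walk a b),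
    (Walk.ofInduce p).weight = p.weight
  | _, _, .nil => rfl
  | _, _, .cons h p => by
      simp [ofInduce, weight, weight_ofInduce p]; rfl

lemma Walk.length_support : ∀ {a b : V} (p : G.Walk a b),
    p.support.length = p.edgeCount + 1
  | _, _, .nil => rfl
  | _, _, .cons h p => by simp [support, edgeCount, length_support p]

lemma Walk.exists_split : ∀ {a b : V} (p : G.Walk a b) (x : V), x ∈ p.support →
    ∃ (q : G.Walk a x) (r : G.Walk x b),
      q.weight + r.weight = p.weight ∧ q.edgeCount + r.edgeCount = p.edgeCount
  | a, _, .nil, x, hx => by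
      simp [support] at hx
      subst hx
      exact ⟨.nil, .nil, by simp [weight], by simp [edgeCount]⟩
  | a, b, .cons (v := c) h p, x, hx => by
      rcases eq_or_ne x a with rfl | hne
      · exact ⟨.nil, .cons h p, by simp [weight], by simp [edgeCount]⟩
      · have hx' : x ∈ p.support := by
          simp [support] at hx
          tauto
        obtain ⟨q, r, hw, he⟩ := exists_split p x hx'
        exact ⟨.cons h q, r, by simp [weight, ← hw, add_assoc],
          by simp [edgeCount]; omega⟩

lemma Walk.exists_shorter (hnoneg : ∀ (x : V) (p : G.Walk x x), 0 ≤ p.weight) :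
    ∀ {a b : V} (p : G.Walk a b), ¬ p.support.Nodup →
    ∃ q : G.Walk a b, q.weight ≤ p.weight ∧ q.edgeCount < p.edgeCount
  | a, _, .nil, hnd => by simp [support] at hnd
  | a, b, .cons (v := c) h p, hnd => by
      rw [show Walk.support (.cons h p) = a :: p.support from rfl, List.nodup_cons] at hnd
      push_neg at hnd
      by_cases ha : a ∈ p.support
      · obtain ⟨q, r, hw, he⟩ := exists_split p a ha
        have hcyc : (0:ℤ) ≤ (Walk.cons h q).weight := hnoneg a _
        refine ⟨r, ?_, ?_⟩
        · have : Walk.weight (.cons h p) = G.len a c + p.weight := rfl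
          have h2 : Walk.weight (.cons h q) = G.len a c + q.weight := rfl
          rw [this, ← hw]
          linarith [hcyc, h2 ▸ hcyc]
        · have : Walk.edgeCount (.cons h p) = p.edgeCount + 1 := rfl
          omega
      · obtain ⟨q, hw, he⟩ := exists_shorter hnoneg p (hnd ha)
        refine ⟨.cons h q, ?_, ?_⟩
        · show G.len a c + q.weight ≤ G.len a c + p.weight
          linarith
        · show q.edgeCount + 1 < p.edgeCount + 1
          omega

lemma Walk.exists_nodup_le (hnoneg : ∀ (x : V) (p : G.Walk x x), 0 ≤ p.weight) :
    ∀ (n : ℕ) {a b : V} (p : G.Walk a b), p.edgeCount ≤ n →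
    ∃ q : G.Walk a b, q.weight ≤ p.weight ∧ q.support.Nodup := by
  intro n
  induction n with
  | zero => intro a b p hp
            by_cases hnd : p.support.Nodup
            · exact ⟨p, le_refl _, hnd⟩
            · obtain ⟨q, _, he⟩ := exists_shorter hnoneg p hnd
              omega
  | succ n ih =>
      intro a b p hp
      by_cases hnd : p.support.Nodup
      · exact ⟨p, le_refl _, hnd⟩
      · obtain ⟨q, hw, he⟩ := exists_shorter hnoneg p hnd
        obtain ⟨r, hrw, hrnd⟩ := ih q (by omega)
        exact ⟨r, le_trans hrw hw, hrnd⟩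

lemma Walk.weight_ge_bound {M : ℤ} (hM : ∀ a b : V, -M ≤ G.len a b) :
    ∀ {a b : V} (p : G.Walk a b), -(p.edgeCount * M) ≤ p.weight
  | _, _, .nil => by simp [weight, edgeCount]
  | a, _, .cons (v := c) h p => by
      have h1 := weight_ge_bound hM p
      have h2 := hM a c
      show -((p.edgeCount + 1 : ℕ) * M) ≤ G.len a c + p.weight
      push_cast
      linarith

lemma exists_global_bound [Fintype V]
    (hnoneg : ∀ (x : V) (p : G.Walk x x), 0 ≤ p.weight) :
    ∃ m : ℤ, ∀ (a b : V) (p : G.Walk a b), m ≤ p.weight := by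
  obtain ⟨M, hM⟩ := Finset.exists_le
    ((Finset.univ : Finset (V × V)).image fun ab => -G.len ab.1 ab.2)
  set M' : ℤ := max M 0 with hM'
  have hlen : ∀ a b : V, -M' ≤ G.len a b := by
    intro a b
    have h3 : -G.len a b ≤ M := hM _ (Finset.mem_image_of_mem _ (Finset.mem_univ (a, b)))
    simp only [hM']
    omega
  refine ⟨-(Fintype.card V * M'), fun a b p => ?_⟩
  obtain ⟨q, hw, hnd⟩ := Walk.exists_nodup_le hnoneg p.edgeCount p (le_refl _)
  have hle : q.edgeCount ≤ Fintype.card V := by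
    have := hnd.length_le_card
    rw [q.length_support] at this
    omega
  have h1 := Walk.weight_ge_bound hlen q
  have h2 : (q.edgeCount : ℤ) * M' ≤ Fintype.card V * M' := by
    apply mul_le_mul_of_nonneg_right
    · exact_mod_cast hle
    · simp [hM']
  linarith

lemma dist_le_weight {a b : V} (p : G.Walk a b) :
    G.dist a b ≤ ((p.weight : ℝ) : EReal) := iInf_le _ p

lemma dist_ne_bot {m : ℤ} (hm : ∀ (a b : V) (p : G.Walk a b), m ≤ p.weight)
    (a b : V) : G.dist a b ≠ ⊥ := by
  have : ((m : ℝ) : EReal) ≤ G.dist a b := by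
    apply le_iInf
    intro p
    exact EReal.coe_le_coe_iff.mpr (by exact_mod_cast hm a b p)
  intro h
  rw [h] at this
  exact not_le_of_gt (EReal.bot_lt_coe (m : ℝ)) this

lemma dist_eq_top_of_isEmpty {a b : V} (h : IsEmpty (G.Walk a b)) :
    G.dist a b = ⊤ := by
  simp [dist, iInf_of_empty]

lemma nonempty_of_dist_ne_top {a b : V} (h : G.dist a b ≠ ⊤) :
    Nonempty (G.Walk a b) := by
  by_contra hne
  exact h (dist_eq_top_of_isEmpty (not_nonempty_iff.mp hne))

lemma exists_min_walk {a b : V} {m : ℤ} (hm : ∀ (p : G.Walk a b), m ≤ p.weight)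
    (hne : Nonempty (G.Walk a b)) :
    ∃ p : G.Walk a b, (∀ q : G.Walk a b, p.weight ≤ q.weight) ∧
      G.dist a b = ((p.weight : ℝ) : EReal) := by
  obtain ⟨lb, ⟨p, hp⟩, hlb⟩ := Int.exists_least_of_bdd
    (P := fun w => ∃ p : G.Walk a b, p.weight = w)
    ⟨m, fun z hz => by obtain ⟨p, hp⟩ := hz; exact hp ▸ hm p⟩
    ⟨hne.some.weight, hne.some, rfl⟩
  refine ⟨p, fun q => ?_, ?_⟩
  · rw [hp]; exact hlb _ ⟨q, rfl⟩
  · refine le_antisymm (dist_le_weight p) (le_iInf fun q => ?_)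
    apply EReal.coe_le_coe_iff.mpr
    have := hlb _ ⟨q, rfl⟩
    rw [hp] at *
    exact_mod_cast this


lemma split_first {V : Type} {G : Digraph' V} {k : ℕ} {Vs : Fin k → Set V} {T : Set V}
    (hdelta : ∀ i j : Fin k, i ≠ j → Vs i ∩ Vs j = T)
    (hedge : ∀ u v : V, G.Adj u v → ∃ i, u ∈ Vs i ∧ v ∈ Vs i)
    (i : Fin k) (u : V) (hu : u ∈ T) :
    ∀ {v : V} (p : G.Walk v u), v ∈ Vs i \ T →
    ∃ z ∈ T, ∃ (q : (G.induce (Vs i)).Walk v z) (r : G.Walk z u),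
      q.weight + r.weight = p.weight
  | _, .nil, hv => absurd hu hv.2
  | v, .cons (v := c) h p, hv => by
      obtain ⟨j, hvj, hcj⟩ := hedge v c h
      have hvi : v ∈ Vs i := hv.1
      have hji : j = i := by
        by_contra hne
        exact hv.2 ((hdelta j i hne) ▸ ⟨hvj, hvi⟩)
      rw [hji] at hcj
      by_cases hcT : c ∈ T
      · refine ⟨c, hcT, .cons ⟨h, hvi, hcj⟩ .nil, p, ?_⟩
        show (G.len v c + 0) + p.weight = G.len v c + p.weight
        ring
      · obtain ⟨z, hz, q, r, hw⟩ := split_first hdelta hedge i u hu p ⟨hcj, hcT⟩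
        refine ⟨z, hz, .cons ⟨h, hvi, hcj⟩ q, r, ?_⟩
        show (G.len v c + q.weight) + r.weight = G.len v c + p.weight
        rw [add_assoc, hw]


end Digraph'

/-- For every `v ∈ W_i` and every `u ∈ T`,
`δ_G(v,u) = min_{z ∈ T ∪ {u}} ( δ_i(v,z) + δ_G(z,u) )`; in particular, either some directed
walk realizing `δ_G(v,u)` lies entirely inside `G_i`, or
`δ_G(v,u) = δ_i(v,z) + δ_G(z,u)` for some `z ∈ T`. -/
theorem stmt3 {V : Type} [Fintype V] (G : Digraph' V)
    (hnoneg : ∀ (x : V) (p : G.Walk x x), 0 ≤ p.weight)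
    (k : ℕ) (hk : 2 ≤ k) (Vs : Fin k → Set V)
    (hcover : (⋃ i, Vs i) = Set.univ)
    (T : Set V) (hdelta : ∀ i j : Fin k, i ≠ j → Vs i ∩ Vs j = T)
    (hedge : ∀ u v : V, G.Adj u v → ∃ i, u ∈ Vs i ∧ v ∈ Vs i)
    (i : Fin k) (u v : V) (hu : u ∈ T) (hv : v ∈ Vs i \ T) :
    (G.dist v u = ⨅ z ∈ T ∪ {u}, ((G.induce (Vs i)).dist v z + G.dist z u)) ∧
    (G.dist v u ≠ ⊤ →
      (∃ p : (G.induce (Vs i)).Walk v u, ((p.weight : ℝ) : EReal) = G.dist v u) ∨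
      ∃ z ∈ T, G.dist v u = (G.induce (Vs i)).dist v z + G.dist z u) := by
  obtain ⟨m, hm⟩ := Digraph'.exists_global_bound hnoneg
  have hmi : ∀ (a b : V) (p : (G.induce (Vs i)).Walk a b), m ≤ p.weight := by
    intro a b p
    rw [← Digraph'.Walk.weight_ofInduce p]
    exact hm a b _
  have hGbot : ∀ a b : V, G.dist a b ≠ ⊥ := Digraph'.dist_ne_bot hm
  have hIbot : ∀ a b : V, (G.induce (Vs i)).dist a b ≠ ⊥ := Digraph'.dist_ne_bot hmi
  -- upper bound on dist by each candidate term
  have hle : ∀ z : V, G.dist v u ≤ (G.induce (Vs i)).dist v z + G.dist z u := by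
    intro z
    by_cases hA : (G.induce (Vs i)).dist v z = ⊤
    · rw [hA, EReal.top_add_of_ne_bot (hGbot z u)]; exact le_top
    by_cases hB : G.dist z u = ⊤
    · rw [hB, EReal.add_top_of_ne_bot (hIbot v z)]; exact le_top
    obtain ⟨pa, _, hpa⟩ := Digraph'.exists_min_walk (hmi v z)
      (Digraph'.nonempty_of_dist_ne_top hA)
    obtain ⟨pb, _, hpb⟩ := Digraph'.exists_min_walk (hm z u)
      (Digraph'.nonempty_of_dist_ne_top hB)
    have hdl := Digraph'.dist_le_weight (Digraph'.Walk.append pa.ofInduce pb)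
    rw [Digraph'.Walk.weight_append, Digraph'.Walk.weight_ofInduce] at hdl
    rw [hpa, hpb]
    refine le_trans hdl (le_of_eq ?_)
    norm_cast
  -- lower bound: any minimal walk splits at its first T-vertex
  have hsplit : G.dist v u ≠ ⊤ →
      ∃ z ∈ T, (G.induce (Vs i)).dist v z + G.dist z u ≤ G.dist v u := by
    intro hT
    obtain ⟨p, _, hp⟩ := Digraph'.exists_min_walk (hm v u)
      (Digraph'.nonempty_of_dist_ne_top hT)
    obtain ⟨z, hz, q, r, hw⟩ := Digraph'.split_first hdelta hedge i u hu p hv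
    refine ⟨z, hz, ?_⟩
    calc (G.induce (Vs i)).dist v z + G.dist z u
        ≤ ((q.weight : ℝ) : EReal) + ((r.weight : ℝ) : EReal) :=
          add_le_add (Digraph'.dist_le_weight q) (Digraph'.dist_le_weight r)
      _ = (((q.weight + r.weight : ℤ) : ℝ) : EReal) := by norm_cast
      _ = ((p.weight : ℝ) : EReal) := by rw [hw]
      _ = G.dist v u := hp.symm
  constructor
  · refine le_antisymm (le_iInf₂ fun z _ => hle z) ?_
    by_cases hT : G.dist v u = ⊤
    · rw [hT]; exact le_top
    · obtain ⟨z, hz, hzle⟩ := hsplit hT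
      exact le_trans (iInf₂_le z (Set.mem_union_left _ hz)) hzle
  · intro hT
    obtain ⟨z, hz, hzle⟩ := hsplit hT
    exact Or.inr ⟨z, hz, le_antisymm (hle z) hzle⟩
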